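/- Let r ≥ 1, let δ be an integer, and set ρ̂ = (−δ/2, −δ/2 − 1, …, −δ/2 − (r−1)) ∈ ℚ^r ⊆ ℝ^r. Let λ, μ ∈ ℝ^r be weakly decreasing tuples. If μ + ρ̂ = w(λ + ρ̂) for some signed permutation w (i.e., λ and μ are conjugate under the star action of W(C_r)), then (λ ∩ μ) + ρ̂ = w'(λ + ρ̂) for some signed permutation w' (i.e., λ and λ ∩ μ are conjugate under the star action of W(C_r)). -/

import Mathlib

/-- `y` is obtained from `x` by a signed permutation, i.e. `x` and `y` are
conjugate under the Weyl group `W(C_r)` acting on `ℝ^r` by signed permutations. -/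
def IsSignedPermOf {r : ℕ} (x y : Fin r → ℝ) : Prop :=
  ∃ (σ : Equiv.Perm (Fin r)) (ε : Fin r → ℝ),
    (∀ i, ε i = 1 ∨ ε i = -1) ∧ ∀ i, y i = ε i * x (σ i)

lemma aux_clash {r : ℕ} (a b : Fin r → ℝ) (ha : StrictAnti a) (hb : StrictAnti b)
    (σ : Equiv.Perm (Fin r)) (ε : Fin r → ℝ) (hε : ∀ i, ε i = 1 ∨ ε i = -1)
    (hab : ∀ i, b i = ε i * a (σ i)) (i j : Fin r) (hσ : σ i = j)
    (hi : b i < a i) (hj : a j ≤ b j) : False := by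
  have hij : i ≠ j := by
    intro h; subst h; exact absurd (lt_of_lt_of_le hi hj) (lt_irrefl _)
  rcases hε i with hεi | hεi
  · -- b i = a j, then a j < a i so i < j, then b j < b i = a j ≤ b j
    have hbi : b i = a j := by rw [hab i, hσ, hεi, one_mul]
    have h1 : i < j := ha.lt_iff_gt.mp (hbi ▸ hi)
    have h2 : b j < b i := hb h1
    rw [hbi] at h2; exact absurd (lt_of_le_of_lt hj h2) (lt_irrefl _)
  · have hbi : b i = - a j := by rw [hab i, hσ, hεi]; ring
    have hi' : - a j < a i := hbi ▸ hi
    rcases lt_or_gt_of_ne hij with hij' | hij'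
    · -- case i < j : σ maps Ioc i j into Ioo i j, contradiction by cardinality
      have hkey : ∀ k ∈ Finset.Ioc i j, σ k ∈ Finset.Ioo i j := by
        intro k hk
        rw [Finset.mem_Ioc] at hk
        rw [Finset.mem_Ioo]
        have hbk1 : b k < - a j := by rw [← hbi]; exact hb hk.1
        have hbk2 : a j ≤ b k := le_trans hj (hb.antitone hk.2)
        have haσk : a (σ k) = ε k * b k := by
          rw [hab k]; rcases hε k with h | h <;> rw [h] <;> ring
        have h1 : a j ≤ a (σ k) := by
          rcases hε k with h | h <;> rw [haσk, h] <;> nlinarith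
        have h2 : a (σ k) ≤ - a j := by
          rcases hε k with h | h <;> rw [haσk, h] <;> nlinarith
        have hne : σ k ≠ j := by
          intro hkj
          have : k = i := σ.injective (hkj.trans hσ.symm)
          exact absurd (this ▸ hk.1) (lt_irrefl i)
        have h1' : a j < a (σ k) :=
          lt_of_le_of_ne h1 (fun hh => hne (ha.injective hh.symm))
        exact ⟨ha.lt_iff_gt.mp (lt_of_le_of_lt h2 hi'), ha.lt_iff_gt.mp h1'⟩
      have hcard := Finset.card_le_card_of_injOn σ hkey σ.injective.injOn
      have hss : Finset.Ioo i j ⊂ Finset.Ioc i j := by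
        refine ⟨Finset.Ioo_subset_Ioc_self, fun hsub => ?_⟩
        have hjmem := hsub (Finset.mem_Ioc.mpr ⟨hij', le_refl j⟩)
        rw [Finset.mem_Ioo] at hjmem
        exact absurd hjmem.2 (lt_irrefl j)
      exact absurd hcard (not_le.mpr (Finset.card_lt_card hss))
    · -- case j < i : σ.symm maps Ioc j i into Ioo j i
      have hkey : ∀ l ∈ Finset.Ioc j i, σ.symm l ∈ Finset.Ioo j i := by
        intro l hl
        rw [Finset.mem_Ioc] at hl
        rw [Finset.mem_Ioo]
        have hal1 : a l < a j := ha hl.1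
        have hal2 : - a j < a l := lt_of_lt_of_le hi' (ha.antitone hl.2)
        have hbσl : b (σ.symm l) = ε (σ.symm l) * a l := by
          have := hab (σ.symm l); rwa [Equiv.apply_symm_apply] at this
        have h1 : - a j < b (σ.symm l) := by
          rcases hε (σ.symm l) with h | h <;> rw [hbσl, h] <;> nlinarith
        have h2 : b (σ.symm l) < a j := by
          rcases hε (σ.symm l) with h | h <;> rw [hbσl, h] <;> nlinarith
        constructor
        · exact hb.lt_iff_gt.mp (lt_of_lt_of_le h2 hj)
        · rw [← hbi] at h1; exact hb.lt_iff_gt.mp h1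
      have hcard := Finset.card_le_card_of_injOn σ.symm hkey σ.symm.injective.injOn
      have hss : Finset.Ioo j i ⊂ Finset.Ioc j i := by
        refine ⟨Finset.Ioo_subset_Ioc_self, fun hsub => ?_⟩
        have himem := hsub (Finset.mem_Ioc.mpr ⟨hij', le_refl i⟩)
        rw [Finset.mem_Ioo] at himem
        exact absurd himem.2 (lt_irrefl i)
      exact absurd hcard (not_le.mpr (Finset.card_lt_card hss))

lemma key_lemma {r : ℕ} (a b : Fin r → ℝ) (ha : StrictAnti a) (hb : StrictAnti b)
    (h : IsSignedPermOf a b) : IsSignedPermOf a (fun i => min (a i) (b i)) := by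
  classical
  obtain ⟨σ, ε, hε, hab⟩ := h
  set f : Fin r → Fin r := fun i => if b i < a i then σ i else i with hf
  have hinj : Function.Injective f := by
    intro i j hij
    by_cases hi : b i < a i <;> by_cases hj : b j < a j
    · simp only [hf, if_pos hi, if_pos hj] at hij
      exact σ.injective hij
    · simp only [hf, if_pos hi, if_neg hj] at hij
      exact absurd (aux_clash a b ha hb σ ε hε hab i j hij hi (not_lt.mp hj)) id
    · simp only [hf, if_neg hi, if_pos hj] at hij
      exact absurd (aux_clash a b ha hb σ ε hε hab j i hij.symm hj (not_lt.mp hi)) id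
    · simpa only [hf, if_neg hi, if_neg hj] using hij
  refine ⟨Equiv.ofBijective f (Finite.injective_iff_bijective.mp hinj),
    fun i => if b i < a i then ε i else 1, fun i => ?_, fun i => ?_⟩
  · by_cases h : b i < a i <;> simp [h, hε i]
  · have hfi : (Equiv.ofBijective f (Finite.injective_iff_bijective.mp hinj)) i = f i := rfl
    rw [hfi]
    by_cases h : b i < a i
    · simp only [hf, if_pos h]
      rw [min_eq_right (le_of_lt h), hab i]
    · simp only [hf, if_neg h]
      rw [min_eq_left (not_lt.mp h), one_mul]

theorem stmt4 (r : ℕ) (hr : 1 ≤ r) (δ : ℤ) (lam mu : Fin r → ℝ)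
    (hlam : Antitone lam) (hmu : Antitone mu)
    (h : IsSignedPermOf (fun i => lam i + (-(δ : ℝ)/2 - (i : ℕ)))
          (fun i => mu i + (-(δ : ℝ)/2 - (i : ℕ)))) :
    IsSignedPermOf (fun i => lam i + (-(δ : ℝ)/2 - (i : ℕ)))
      (fun i => min (lam i) (mu i) + (-(δ : ℝ)/2 - (i : ℕ))) := by
  have hcast : ∀ i j : Fin r, i < j → ((i : ℕ) : ℝ) < ((j : ℕ) : ℝ) := by
    intro i j hij; exact_mod_cast hij
  have ha : StrictAnti (fun i : Fin r => lam i + (-(δ : ℝ)/2 - (i : ℕ))) := by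
    intro i j hij
    have h1 := hlam hij.le
    have h2 := hcast i j hij
    simp only
    linarith
  have hb : StrictAnti (fun i : Fin r => mu i + (-(δ : ℝ)/2 - (i : ℕ))) := by
    intro i j hij
    have h1 := hmu hij.le
    have h2 := hcast i j hij
    simp only
    linarith
  have := key_lemma _ _ ha hb h
  convert this using 2 with i
  exact (min_add_add_right _ _ _).symm
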